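/- Let Y be a continuous random variable with CDF F and τ ∈ [0,1). Then the Conditional Value-at-Risk satisfies CVaRτ(Y) = inf_{z∈ℝ} { z + (1/(1−τ))·E[(Y−z)⁺] } = E[Y | Y ≥ q(τ)], where q(τ) = F⁻¹(τ) is the τ-quantile and (x)⁺ = max(x,0). -/

import Mathlib

open MeasureTheory

/-- Rockafellar–Uryasev representation: for an integrable random variable `Y`
with continuous strictly increasing CDF `F` and `τ ∈ [0,1)`, with `q(τ) = F⁻¹(τ)`,
`inf_z { z + (1/(1−τ))·E[(Y−z)⁺] } = E[Y | Y ≥ q(τ)]`. -/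
theorem stmt8 {Ω : Type*} [MeasurableSpace Ω] (μ : Measure Ω) [IsProbabilityMeasure μ]
    (Y : Ω → ℝ) (hYm : Measurable Y) (hYint : Integrable Y μ)
    (F : ℝ → ℝ) (hFc : Continuous F) (hFm : StrictMono F)
    (hcdf : ∀ t : ℝ, μ {ω | Y ω ≤ t} = ENNReal.ofReal (F t))
    (τ : ℝ) (hτ : τ ∈ Set.Ico (0:ℝ) 1)
    (qτ : ℝ) (hq : F qτ = τ) :
    sInf {r : ℝ | ∃ z : ℝ, r = z + (1 / (1 - τ)) * ∫ ω, max (Y ω - z) 0 ∂μ} =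
      (1 / (1 - τ)) * ∫ ω in {ω | Y ω ≥ qτ}, Y ω ∂μ := by
  obtain ⟨hτ0, hτ1⟩ := hτ
  have h1τ : (0:ℝ) < 1 - τ := by linarith
  have hsetm : MeasurableSet {ω | Y ω ≥ qτ} := hYm measurableSet_Ici
  have hltm : MeasurableSet {ω | Y ω < qτ} := hYm measurableSet_Iio
  -- μ {Y < qτ} = ofReal τ
  have hlt : μ {ω | Y ω < qτ} = ENNReal.ofReal τ := by
    have hub : μ {ω | Y ω < qτ} ≤ ENNReal.ofReal τ := by
      calc μ {ω | Y ω < qτ} ≤ μ {ω | Y ω ≤ qτ} :=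
            measure_mono (Set.setOf_subset_setOf.mpr (fun ω h => le_of_lt h))
        _ = ENNReal.ofReal (F qτ) := hcdf qτ
        _ = ENNReal.ofReal τ := by rw [hq]
    have hlb : ENNReal.ofReal τ ≤ μ {ω | Y ω < qτ} := by
      have htend : Filter.Tendsto (fun n : ℕ => ENNReal.ofReal (F (qτ - 1/(n+1))))
          Filter.atTop (nhds (ENNReal.ofReal (F qτ))) := by
        apply (ENNReal.continuous_ofReal.tendsto _).comp
        apply (hFc.tendsto _).comp
        have h0 : Filter.Tendsto (fun n : ℕ => qτ - 1/((n:ℝ)+1)) Filter.atTop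
            (nhds (qτ - 0)) :=
          Filter.Tendsto.sub tendsto_const_nhds tendsto_one_div_add_atTop_nhds_zero_nat
        simpa using h0
      rw [← hq]
      refine le_of_tendsto htend (Filter.Eventually.of_forall fun n => ?_)
      rw [← hcdf]
      apply measure_mono
      intro ω hω
      have hpos : (0:ℝ) < 1/((n:ℝ)+1) := by positivity
      simp only [Set.mem_setOf_eq] at *
      linarith
    exact le_antisymm hub hlb
  have hge : μ {ω | Y ω ≥ qτ} = ENNReal.ofReal (1 - τ) := by
    have hc : {ω | Y ω ≥ qτ} = {ω | Y ω < qτ}ᶜ := by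
      ext ω; simp [not_lt, ge_iff_le]
    rw [hc, measure_compl hltm (measure_ne_top μ _), hlt, measure_univ,
      ← ENNReal.ofReal_one, ← ENNReal.ofReal_sub _ hτ0]
  have hgeReal : (μ {ω | Y ω ≥ qτ}).toReal = 1 - τ := by
    rw [hge, ENNReal.toReal_ofReal h1τ.le]
  have hint : ∀ z : ℝ, Integrable (fun ω => max (Y ω - z) 0) μ :=
    fun z => (hYint.sub (integrable_const z)).pos_part
  -- computation at z = qτ
  have hmaxq : ∫ ω, max (Y ω - qτ) 0 ∂μ
      = (∫ ω in {ω | Y ω ≥ qτ}, Y ω ∂μ) - qτ * (1 - τ) := by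
    have heq : (fun ω => max (Y ω - qτ) 0)
        = Set.indicator {ω | Y ω ≥ qτ} (fun ω => Y ω - qτ) := by
      ext ω
      by_cases h : Y ω ≥ qτ
      · rw [Set.indicator_of_mem (show ω ∈ {ω | Y ω ≥ qτ} from h), max_eq_left (by linarith : (0:ℝ) ≤ Y ω - qτ)]
      · rw [Set.indicator_of_notMem (show ω ∉ {ω | Y ω ≥ qτ} from h)]
        push_neg at h
        rw [max_eq_right (by linarith : Y ω - qτ ≤ 0)]
    rw [heq, integral_indicator hsetm,
      integral_sub hYint.integrableOn
        (integrableOn_const (C := qτ) (measure_ne_top μ _)),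
      setIntegral_const, measureReal_def, hgeReal]
    simp [smul_eq_mul]; ring
  -- lower bound inequality
  have hlow : ∀ z : ℝ,
      (qτ - z) * (1 - τ) + ∫ ω, max (Y ω - qτ) 0 ∂μ ≤ ∫ ω, max (Y ω - z) 0 ∂μ := by
    intro z
    have hptwise : ∀ ω,
        (Set.indicator {ω | Y ω ≥ qτ} (fun _ => qτ - z) ω + max (Y ω - qτ) 0)
          ≤ max (Y ω - z) 0 := by
      intro ω
      by_cases h : Y ω ≥ qτ
      · rw [Set.indicator_of_mem (show ω ∈ {ω | Y ω ≥ qτ} from h), max_eq_left (by linarith : (0:ℝ) ≤ Y ω - qτ)]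
        have h2 : Y ω - z ≤ max (Y ω - z) 0 := le_max_left _ _
        linarith
      · rw [Set.indicator_of_notMem (show ω ∉ {ω | Y ω ≥ qτ} from h)]
        push_neg at h
        rw [max_eq_right (by linarith : Y ω - qτ ≤ 0)]
        simpa using le_max_right (Y ω - z) 0
    have hintInd : Integrable (Set.indicator {ω | Y ω ≥ qτ} (fun _ => qτ - z)) μ :=
      (integrable_const _).indicator hsetm
    have hmono := integral_mono (hintInd.add (hint qτ)) (hint z) hptwise
    simp only [Pi.add_apply] at hmono
    rw [integral_add hintInd (hint qτ), integral_indicator hsetm,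
      setIntegral_const, measureReal_def, hgeReal, smul_eq_mul] at hmono
    linarith
  set A := ∫ ω in {ω | Y ω ≥ qτ}, Y ω ∂μ with hA
  have hGq : qτ + (1/(1-τ)) * ∫ ω, max (Y ω - qτ) 0 ∂μ = (1/(1-τ)) * A := by
    rw [hmaxq]; field_simp; ring
  have hmem : (1/(1-τ)) * A ∈
      {r : ℝ | ∃ z : ℝ, r = z + (1 / (1 - τ)) * ∫ ω, max (Y ω - z) 0 ∂μ} :=
    ⟨qτ, hGq.symm⟩
  have hlb : ∀ r ∈ {r : ℝ | ∃ z : ℝ, r = z + (1 / (1 - τ)) * ∫ ω, max (Y ω - z) 0 ∂μ},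
      (1/(1-τ)) * A ≤ r := by
    rintro r ⟨z, rfl⟩
    rw [← hGq]
    have h1 := hlow z
    have h2 : (1/(1-τ)) * ((qτ - z) * (1 - τ) + ∫ ω, max (Y ω - qτ) 0 ∂μ)
        ≤ (1/(1-τ)) * ∫ ω, max (Y ω - z) 0 ∂μ :=
      mul_le_mul_of_nonneg_left h1 (by positivity)
    have h3 : (1/(1-τ)) * ((qτ - z) * (1 - τ) + ∫ ω, max (Y ω - qτ) 0 ∂μ)
        = (qτ - z) + (1/(1-τ)) * ∫ ω, max (Y ω - qτ) 0 ∂μ := by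
      field_simp
    linarith
  exact le_antisymm (csInf_le ⟨(1/(1-τ)) * A, hlb⟩ hmem) (le_csInf ⟨_, hmem⟩ hlb)
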